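/- arXiv:1110.4162 — 3 statements merged into one kernel-verified Lean document; each statement's English description precedes it below -/
import Mathlib

section
/- Let L/F be a finite field extension and let F₁, F₂ be intermediate fields of L/F such that the compositum F₁F₂ equals L and [L : F] = [F₁ : F]·[F₂ : F] (equivalently, the natural map F₁ ⊗_F F₂ → L is an isomorphism, i.e. F₁ ⊗_F F₂ is a field equal to L). If F₁/F is Galois and L/F₁ is Galois, then L/F is Galois. -/
universe u

open scoped TensorProduct

set_option synthInstance.maxHeartbeats 1000000
set_option maxHeartbeats 1000000

/-- if `F₁`, `F₂` are intermediate fields of a finite extension `L/F` with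
`F₁F₂ = L` and `[L : F] = [F₁ : F]·[F₂ : F]` (so that `F₁ ⊗_F F₂ ≅ L`), and both `F₁/F` and
`L/F₁` are Galois, then `L/F` is Galois. -/
theorem statement_7 (F L : Type u) [Field F] [Field L] [Algebra F L] [FiniteDimensional F L]
    (F₁ F₂ : IntermediateField F L) (hcomp : F₁ ⊔ F₂ = ⊤)
    (hdeg : Module.finrank F L = Module.finrank F (↥F₁) * Module.finrank F (↥F₂))
    (h1 : IsGalois F (↥F₁)) (h2 : IsGalois (↥F₁) L) :
    IsGalois F L := by
  classical
  -- linear disjointness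
  have hld : F₁.LinearDisjoint F₂ := by
    apply IntermediateField.LinearDisjoint.of_finrank_sup
    rw [hcomp, IntermediateField.finrank_top']
    exact hdeg
  have hs : F₁.toSubalgebra.LinearDisjoint F₂.toSubalgebra :=
    (IntermediateField.linearDisjoint_iff').1 hld
  have hsup : F₁.toSubalgebra ⊔ F₂.toSubalgebra = ⊤ := by
    rw [← IntermediateField.sup_toSubalgebra_of_left, hcomp, IntermediateField.top_toSubalgebra]
  -- the algebra isomorphism `F₁ ⊗[F] F₂ ≃ₐ[F] L`
  let e : (↥F₁.toSubalgebra ⊗[F] ↥F₂.toSubalgebra) ≃ₐ[F] L :=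
    hs.mulMap.trans ((Subalgebra.equivOfEq _ _ hsup).trans Subalgebra.topEquiv)
  have he : ∀ (a : F₁) (b : F₂), e (a ⊗ₜ[F] b) = (a : L) * (b : L) := fun a b => rfl
  -- lifting automorphisms of `F₁` to `L`
  let lift : (↥F₁ ≃ₐ[F] ↥F₁) → (L ≃ₐ[F] L) := fun σ =>
    (e.symm.trans (Algebra.TensorProduct.congr σ AlgEquiv.refl)).trans e
  have hlift : ∀ (σ : ↥F₁ ≃ₐ[F] ↥F₁) (a : F₁), lift σ (a : L) = ((σ a : F₁) : L) := by
    intro σ a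
    have h1 : e ((a : ↥F₁.toSubalgebra) ⊗ₜ[F] (1 : ↥F₂.toSubalgebra)) = (a : L) := by
      rw [he a 1]; simp
    have h2 : e.symm (a : L) = (a : ↥F₁.toSubalgebra) ⊗ₜ[F] (1 : ↥F₂.toSubalgebra) := by
      rw [← h1, AlgEquiv.symm_apply_apply]
    show e (Algebra.TensorProduct.congr σ AlgEquiv.refl (e.symm (a : L))) = _
    rw [h2]
    have h3 : Algebra.TensorProduct.congr σ (AlgEquiv.refl (A₁ := ↥F₂.toSubalgebra))
        ((a : ↥F₁.toSubalgebra) ⊗ₜ[F] (1 : ↥F₂.toSubalgebra))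
        = (σ a : ↥F₁.toSubalgebra) ⊗ₜ[F] (1 : ↥F₂.toSubalgebra) := by
      simp [Algebra.TensorProduct.congr_apply]
    rw [h3]
    rw [he (σ a) 1]; simp
  -- the injection from the product
  let Φ : ((↥F₁ ≃ₐ[F] ↥F₁) × (L ≃ₐ[F₁] L)) → (L ≃ₐ[F] L) := fun p =>
    (lift p.1).trans (p.2.restrictScalars F)
  have hΦval : ∀ (p : (↥F₁ ≃ₐ[F] ↥F₁) × (L ≃ₐ[F₁] L)) (a : F₁),
      Φ p (a : L) = ((p.1 a : F₁) : L) := by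
    intro p a
    show p.2 (lift p.1 (a : L)) = _
    rw [hlift]
    exact p.2.commutes (p.1 a)
  have hΦ : Function.Injective Φ := by
    intro p q hpq
    have hσ : p.1 = q.1 := by
      apply AlgEquiv.ext
      intro a
      apply Subtype.coe_injective
      have := congrArg (fun f : L ≃ₐ[F] L => f (a : L)) hpq
      rw [hΦval p a, hΦval q a] at this
      exact this
    have hτ : ∀ x : L, p.2 x = q.2 x := by
      intro x
      have := congrArg (fun f : L ≃ₐ[F] L => f ((lift p.1).symm x)) hpq
      have hx : lift p.1 ((lift p.1).symm x) = x := (lift p.1).apply_symm_apply x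
      calc p.2 x = Φ p ((lift p.1).symm x) := by
            show _ = p.2 (lift p.1 ((lift p.1).symm x)); rw [hx]
        _ = Φ q ((lift p.1).symm x) := this
        _ = q.2 x := by
            show q.2 (lift q.1 ((lift p.1).symm x)) = q.2 x
            rw [← hσ, hx]
    refine Prod.ext hσ (AlgEquiv.ext hτ)
  -- cardinality lower bound
  have hcard : Module.finrank F L ≤ Fintype.card (L ≃ₐ[F] L) := by
    have hle := Fintype.card_le_of_injective Φ hΦ
    rwa [Fintype.card_prod, ← Nat.card_eq_fintype_card (α := ↥F₁ ≃ₐ[F] ↥F₁),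
      IsGalois.card_aut_eq_finrank F ↥F₁, ← Nat.card_eq_fintype_card (α := L ≃ₐ[↥F₁] L),
      IsGalois.card_aut_eq_finrank ↥F₁ L, Module.finrank_mul_finrank F ↥F₁ L] at hle
  -- conclude via Artin
  apply IsGalois.of_fixedField_eq_bot
  set K := IntermediateField.fixedField (⊤ : Subgroup (L ≃ₐ[F] L)) with hKdef
  have hK : Module.finrank K L = Fintype.card (L ≃ₐ[F] L) := by
    rw [IntermediateField.finrank_fixedField_eq_card]
    exact (Nat.card_congr Subgroup.topEquiv.toEquiv).trans Nat.card_eq_fintype_card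
  have hmul : Module.finrank F K * Module.finrank K L = Module.finrank F L :=
    Module.finrank_mul_finrank F K L
  have hpos : 0 < Module.finrank K L := Module.finrank_pos
  have hle1 : Module.finrank F K ≤ 1 := by
    have : Module.finrank F K * Module.finrank K L ≤ 1 * Module.finrank K L := by
      rw [one_mul, hmul]
      rw [hK]; exact hcard
    exact Nat.le_of_mul_le_mul_right this hpos
  have h1' : Module.finrank F K = 1 :=
    le_antisymm hle1 Module.finrank_pos
  exact IntermediateField.finrank_eq_one_iff.1 h1'
end

section
/- Let M/K be a finite Galois extension of fields (all fields taken inside a fixed algebraic closure of K) and G a finite group. If Condition (3) holds, then Condition (2) holds: any M-adequate G-extension L/M that is defined over K is automatically Galois over K. -/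
set_option synthInstance.maxHeartbeats 1000000
set_option maxHeartbeats 1000000
open IntermediateField

universe u

/-- `L/F` is a `G`-extension: a finite Galois extension with Galois group isomorphic to `G`. -/
def IsGExt (F L : Type u) [Field F] [Field L] [Algebra F L] (G : Type u) [Group G] : Prop :=
  FiniteDimensional F L ∧ IsGalois F L ∧ Nonempty ((L ≃ₐ[F] L) ≃* G)

/-- `D` is an `F`-division algebra: a finite-dimensional (associative, unital) `F`-algebra which
is a division ring and whose center is exactly `F`. -/
def IsDivAlg (F D : Type u) [Field F] [Ring D] [Algebra F D] : Prop :=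
  FiniteDimensional F D ∧ Nontrivial D ∧ (∀ x : D, x ≠ 0 → IsUnit x) ∧
    Subalgebra.center F D = ⊥

/-- The field `L` is (`F`-isomorphic to) a maximal subfield of the `F`-algebra `D`,
i.e. it embeds `F`-linearly into `D` and `[L : F]² = dim_F D`. -/
def IsMaxSubfield (F L D : Type u) [Field F] [Field L] [Algebra F L] [Ring D]
    [Algebra F D] : Prop :=
  (∃ _ι : L →ₐ[F] D, True) ∧ Module.finrank F L ^ 2 = Module.finrank F D

/-- `L` is `F`-adequate: `L` is a maximal subfield of some `F`-division algebra. -/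
def IsAdeq (F L : Type u) [Field F] [Field L] [Algebra F L] : Prop :=
  ∃ (D : Type u) (_ : Ring D) (_ : Algebra F D), IsDivAlg F D ∧ IsMaxSubfield F L D

/-- `G` is `F`-admissible: there is an `F`-adequate `G`-extension of `F`. -/
def IsAdmis (F : Type u) [Field F] (G : Type u) [Group G] : Prop :=
  ∃ (L : Type u) (_ : Field L) (_ : Algebra F L), IsGExt F L G ∧ IsAdeq F L

section Conditions

variable (K Ω : Type u) [Field K] [Field Ω] [Algebra K Ω] [IsAlgClosure K Ω]
variable (M : IntermediateField K Ω) (G : Type u) [Group G]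

/-- Condition (1): `G` is `M`-admissible. -/
def Cond1 : Prop := IsAdmis (↥M) G

/-- Condition (2): there is an `M`-adequate `G`-extension `L/M` with `L/K` Galois. -/
def Cond2 : Prop :=
  ∃ (L : IntermediateField K Ω) (h : M ≤ L),
    IsGExt (↥M) (↥(extendScalars h)) G ∧ IsAdeq (↥M) (↥(extendScalars h)) ∧ IsGalois K ↥L

/-- Condition (3): there is an `M`-adequate `G`-extension `L/M` which is defined over `K`. -/
def Cond3 : Prop :=
  ∃ (L : IntermediateField K Ω) (h : M ≤ L),
    IsGExt (↥M) (↥(extendScalars h)) G ∧ IsAdeq (↥M) (↥(extendScalars h)) ∧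
    ∃ L₀ : IntermediateField K Ω, L₀ ≤ L ∧ L₀ ⊓ M = ⊥ ∧ L₀ ⊔ M = L ∧
      Module.finrank K ↥L₀ = Module.finrank (↥M) (↥(extendScalars h))

/-- Condition (4): as Condition (3), with moreover `L₀/K` a `G`-extension. -/
def Cond4 : Prop :=
  ∃ (L : IntermediateField K Ω) (h : M ≤ L),
    IsGExt (↥M) (↥(extendScalars h)) G ∧ IsAdeq (↥M) (↥(extendScalars h)) ∧
    ∃ L₀ : IntermediateField K Ω, L₀ ≤ L ∧ L₀ ⊓ M = ⊥ ∧ L₀ ⊔ M = L ∧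
      Module.finrank K ↥L₀ = Module.finrank (↥M) (↥(extendScalars h)) ∧
      IsGExt K (↥L₀) G

/-- Condition (5): there are a `K`-division algebra `D₀` and a `G`-extension `L/M` such that
`D₀ ⊗_K M` (realized as `M ⊗_K D₀`) is a division algebra having `L` as a maximal subfield. -/
def Cond5 : Prop :=
  ∃ (D₀ : Type u) (_ : Ring D₀) (_ : Algebra K D₀), IsDivAlg K D₀ ∧
    ∃ (L : IntermediateField K Ω) (h : M ≤ L),
      IsGExt (↥M) (↥(extendScalars h)) G ∧
      IsDivAlg (↥M) (TensorProduct K (↥M) D₀) ∧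
      IsMaxSubfield (↥M) (↥(extendScalars h)) (TensorProduct K (↥M) D₀)

/-- Condition (6): there is a `K`-division algebra `D₀` with a maximal subfield `L₀` which is a
`G`-extension of `K` with `L₀ ∩ M = K`, such that `D₀ ⊗_K M` is a division algebra having the
compositum `L₀M` as a maximal subfield. -/
def Cond6 : Prop :=
  ∃ (D₀ : Type u) (_ : Ring D₀) (_ : Algebra K D₀), IsDivAlg K D₀ ∧
    ∃ L₀ : IntermediateField K Ω,
      IsGExt K (↥L₀) G ∧ IsMaxSubfield K (↥L₀) D₀ ∧ L₀ ⊓ M = ⊥ ∧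
      IsDivAlg (↥M) (TensorProduct K (↥M) D₀) ∧
      IsMaxSubfield (↥M) (↥(extendScalars (le_sup_right : M ≤ L₀ ⊔ M)))
        (TensorProduct K (↥M) D₀)

/-- Condition (7): there is a `K`-adequate `G`-extension `L₀/K` with `L₀ ∩ M = K` such that the
compositum `L₀M` is `M`-adequate. -/
def Cond7 : Prop :=
  ∃ L₀ : IntermediateField K Ω,
    IsGExt K (↥L₀) G ∧ IsAdeq K (↥L₀) ∧ L₀ ⊓ M = ⊥ ∧
    IsAdeq (↥M) (↥(extendScalars (le_sup_right : M ≤ L₀ ⊔ M)))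

/-- Condition (8): there is a `K`-adequate extension `L₀/K` with `L₀ ∩ M = K` such that the
compositum `L = L₀M` is an `M`-adequate `G`-extension of `M`. -/
def Cond8 : Prop :=
  ∃ L₀ : IntermediateField K Ω,
    FiniteDimensional K (↥L₀) ∧ IsAdeq K (↥L₀) ∧ L₀ ⊓ M = ⊥ ∧
    IsGExt (↥M) (↥(extendScalars (le_sup_right : M ≤ L₀ ⊔ M))) G ∧
    IsAdeq (↥M) (↥(extendScalars (le_sup_right : M ≤ L₀ ⊔ M)))

/-- Condition (9): `G` is both `K`-admissible and `M`-admissible. -/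
def Cond9 : Prop := IsAdmis K G ∧ IsAdmis (↥M) G

/-- Condition (10): there is a `K`-division algebra `D₀` having a maximal subfield which is a
`G`-extension of `K`, such that `D₀ ⊗_K M` is also a division algebra having a maximal subfield
which is a `G`-extension of `M`. -/
def Cond10 : Prop :=
  ∃ (D₀ : Type u) (_ : Ring D₀) (_ : Algebra K D₀), IsDivAlg K D₀ ∧
    (∃ L₀ : IntermediateField K Ω, IsGExt K (↥L₀) G ∧ IsMaxSubfield K (↥L₀) D₀) ∧
    IsDivAlg (↥M) (TensorProduct K (↥M) D₀) ∧
    ∃ (L : IntermediateField K Ω) (h : M ≤ L),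
      IsGExt (↥M) (↥(extendScalars h)) G ∧
      IsMaxSubfield (↥M) (↥(extendScalars h)) (TensorProduct K (↥M) D₀)

end Conditions

open scoped TensorProduct in
set_option linter.unusedVariables false in
private theorem galois_of_defined_over {K Ω : Type u} [Field K] [Field Ω] [Algebra K Ω] [IsAlgClosure K Ω]
    (M : IntermediateField K Ω) [FiniteDimensional K (↥M)] [IsGalois K (↥M)]
    (L : IntermediateField K Ω) (hML : M ≤ L)
    (hFD : FiniteDimensional (↥M) (↥(extendScalars hML)))
    (hGal : IsGalois (↥M) (↥(extendScalars hML)))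
    (L₀ : IntermediateField K Ω) (hL₀L : L₀ ≤ L) (hinf : L₀ ⊓ M = ⊥)
    (hsup : L₀ ⊔ M = L)
    (hrank : Module.finrank K ↥L₀ = Module.finrank (↥M) (↥(extendScalars hML))) :
    IsGalois K ↥L := by
  haveI hFDL : FiniteDimensional K (↥(extendScalars hML)) :=
    FiniteDimensional.trans K (↥M) (↥(extendScalars hML))
  haveI hFDL' : FiniteDimensional K (↥L) := hFDL
  haveI hFDL₀ : FiniteDimensional K (↥L₀) :=
    FiniteDimensional.of_injective (IntermediateField.inclusion hL₀L).toLinearMap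
      (IntermediateField.inclusion hL₀L).toRingHom.injective
  have htower : Module.finrank K (↥M) * Module.finrank (↥M) (↥(extendScalars hML))
      = Module.finrank K (↥L) :=
    Module.finrank_mul_finrank K (↥M) (↥(extendScalars hML))
  have hld : L₀.LinearDisjoint M := by
    apply IntermediateField.LinearDisjoint.of_finrank_sup
    rw [hsup, hrank, mul_comm]
    exact htower.symm
  have hld' := IntermediateField.linearDisjoint_iff'.1 hld
  have hsupalg : L₀.toSubalgebra ⊔ M.toSubalgebra = L.toSubalgebra := by
    rw [← IntermediateField.sup_toSubalgebra_of_left, hsup]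
  let e : ((↥L₀) ⊗[K] (↥M)) ≃ₐ[K] ↥L :=
    hld'.mulMap.trans (Subalgebra.equivOfEq _ _ hsupalg)
  have he : ∀ m : ↥M, e ((1 : ↥L₀) ⊗ₜ[K] m) = ⟨m.1, hML m.2⟩ :=
    fun m => Subtype.ext (one_mul m.1)
  let ρ : (↥M ≃ₐ[K] ↥M) → (↥L ≃ₐ[K] ↥L) := fun τ =>
    e.symm.trans ((Algebra.TensorProduct.congr AlgEquiv.refl τ).trans e)
  have hρ : ∀ (τ : ↥M ≃ₐ[K] ↥M) (m : ↥M), ρ τ ⟨m.1, hML m.2⟩ = ⟨(τ m).1, hML (τ m).2⟩ := by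
    intro τ m
    have h1 : e.symm ⟨m.1, hML m.2⟩ = (1 : ↥L₀) ⊗ₜ[K] m := by
      rw [← he m]; exact e.symm_apply_apply _
    show e ((Algebra.TensorProduct.congr (AlgEquiv.refl (R := K) (A₁ := ↥L₀)) τ) (e.symm ⟨m.1, hML m.2⟩)) = _
    rw [h1]
    have h2 : (Algebra.TensorProduct.congr (AlgEquiv.refl (R := K) (A₁ := ↥L₀)) τ) ((1 : ↥L₀) ⊗ₜ[K] m)
        = (1 : ↥L₀) ⊗ₜ[K] (τ m) := by
      simp [Algebra.TensorProduct.congr_apply]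
    rw [h2, he]
  haveI : Normal K Ω := IsAlgClosure.normal K Ω
  have hnormal : Normal K (↥L) := by
    rw [normal_iff_forall_fieldRange_le]
    intro σ
    let σ' : (↥(extendScalars hML)) →ₐ[K] Ω := σ
    let τ : ↥M ≃ₐ[K] ↥M := σ'.restrictNormal' ↥M
    have hτ : ∀ m : ↥M, σ' (algebraMap (↥M) (↥(extendScalars hML)) m) = algebraMap (↥M) Ω (τ m) :=
      fun m => (AlgHom.restrictNormal_commutes σ' (↥M) m).symm
    let σ₂ : (↥L) →ₐ[K] Ω := σ.comp (ρ τ).symm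
    have hfix : ∀ m : ↥M, σ₂ (algebraMap (↥M) (↥(extendScalars hML)) m) = algebraMap (↥M) Ω m := by
      intro m
      have h2 : (ρ τ).symm ⟨m.1, hML m.2⟩ = ⟨(τ.symm m).1, hML (τ.symm m).2⟩ := by
        apply (ρ τ).injective
        rw [AlgEquiv.apply_symm_apply, hρ, AlgEquiv.apply_symm_apply]
      have h3 : algebraMap (↥M) (↥(extendScalars hML)) m = ⟨m.1, hML m.2⟩ := rfl
      calc σ₂ (algebraMap (↥M) (↥(extendScalars hML)) m)
          = σ ((ρ τ).symm ⟨m.1, hML m.2⟩) := by rw [h3]; rfl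
        _ = σ' (algebraMap (↥M) (↥(extendScalars hML)) (τ.symm m)) := by rw [h2]; rfl
        _ = algebraMap (↥M) Ω (τ (τ.symm m)) := hτ _
        _ = algebraMap (↥M) Ω m := by rw [AlgEquiv.apply_symm_apply]
    let Φ : (↥(extendScalars hML)) →ₐ[↥M] Ω :=
      { toRingHom := σ₂.toRingHom, commutes' := hfix }
    have hran : Φ.fieldRange = extendScalars hML := Φ.fieldRange_of_normal
    intro x hx
    obtain ⟨y, rfl⟩ := hx
    have hxy : σ y = Φ ((ρ τ) y) := by
      show σ y = σ₂ ((ρ τ) y)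
      show σ y = σ ((ρ τ).symm ((ρ τ) y))
      rw [AlgEquiv.symm_apply_apply]
    have hmem : Φ ((ρ τ) y) ∈ Φ.fieldRange := ⟨_, rfl⟩
    rw [hran] at hmem
    show σ y ∈ L
    rw [hxy]
    exact hmem
  haveI hsep : Algebra.IsSeparable K (↥L) :=
    Algebra.IsSeparable.trans K (↥M) (↥(extendScalars hML))
  exact { to_isSeparable := hsep, to_normal := hnormal }

/-- if `M/K` is Galois then Condition (3) implies Condition (2). -/
theorem statement_8 {K Ω : Type u} [Field K] [Field Ω] [Algebra K Ω] [IsAlgClosure K Ω]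
    (M : IntermediateField K Ω) [FiniteDimensional K (↥M)] [IsGalois K (↥M)]
    (G : Type u) [Group G] [Finite G]
    (h3 : Cond3 K Ω M G) :
    Cond2 K Ω M G := by
  obtain ⟨L, hML, hGExt, hAdeq, L₀, hL₀L, hinf, hsup, hrank⟩ := h3
  exact ⟨L, hML, hGExt, hAdeq,
    galois_of_defined_over M L hML hGExt.1 hGExt.2.1 L₀ hL₀L hinf hsup hrank⟩
end

section
/- Let p be an odd prime and let V = (ℤ/pℤ)³ be the elementary abelian group of order p³. Then for every group homomorphism φ : V → Aut(V), the semidirect product V ⋊_φ V cannot be generated by fewer than 4 elements; that is, every generating set of V ⋊_φ V has cardinality at least 4. -/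
set_option synthInstance.maxHeartbeats 1000000
set_option maxHeartbeats 1000000

section Aux

variable {p : ℕ} [Fact p.Prime]
variable (φ : Multiplicative (Fin 3 → ZMod p) →* MulAut (Multiplicative (Fin 3 → ZMod p)))

/-- `φ h` as a `ZMod p`-linear map. -/
def philin (h : Multiplicative (Fin 3 → ZMod p)) :
    (Fin 3 → ZMod p) →ₗ[ZMod p] (Fin 3 → ZMod p) :=
  AddMonoidHom.toZModLinearMap p
    { toFun := fun v => Multiplicative.toAdd ((φ h) (Multiplicative.ofAdd v))
      map_zero' := by
        show Multiplicative.toAdd ((φ h) 1) = 0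
        rw [map_one]; rfl
      map_add' := fun a b => by
        show Multiplicative.toAdd ((φ h) (Multiplicative.ofAdd (a + b))) = _
        rw [ofAdd_add, map_mul, toAdd_mul] }

lemma philin_apply (h : Multiplicative (Fin 3 → ZMod p)) (v : Fin 3 → ZMod p) :
    philin φ h v = Multiplicative.toAdd (φ h (Multiplicative.ofAdd v)) := rfl

lemma philin_mul (a b : Multiplicative (Fin 3 → ZMod p)) :
    philin φ (a * b) = (philin φ a) ∘ₗ (philin φ b) := by
  ext v
  simp [philin_apply, map_mul]

lemma philin_one : philin φ 1 = LinearMap.id := by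
  ext v
  simp [philin_apply, map_one]

/-- Action of the acting copy of `V` on the dual of `V`. -/
def dualEnd : Multiplicative (Fin 3 → ZMod p) →*
    Function.End (Module.Dual (ZMod p) (Fin 3 → ZMod p)) where
  toFun h := fun f => f ∘ₗ philin φ h⁻¹
  map_one' := by
    funext f
    show f ∘ₗ philin φ 1⁻¹ = f
    rw [inv_one, philin_one, LinearMap.comp_id]
  map_mul' a b := by
    funext f
    show f ∘ₗ philin φ (a * b)⁻¹ = (f ∘ₗ philin φ b⁻¹) ∘ₗ philin φ a⁻¹
    rw [mul_inv_rev, philin_mul, LinearMap.comp_assoc]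

lemma exists_fixed_functional :
    ∃ f : Module.Dual (ZMod p) (Fin 3 → ZMod p), f ≠ 0 ∧
      ∀ h, f ∘ₗ philin φ h = f := by
  classical
  letI : MulAction (Multiplicative (Fin 3 → ZMod p))
      (Module.Dual (ZMod p) (Fin 3 → ZMod p)) := MulAction.ofEndHom (dualEnd φ)
  have hsmul : ∀ (h : Multiplicative (Fin 3 → ZMod p))
      (f : Module.Dual (ZMod p) (Fin 3 → ZMod p)), h • f = f ∘ₗ philin φ h⁻¹ := fun _ _ => rfl
  have hpgrp : IsPGroup p (Multiplicative (Fin 3 → ZMod p)) := by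
    apply IsPGroup.of_card (n := 3)
    have : Nat.card (Multiplicative (Fin 3 → ZMod p)) = Nat.card (Fin 3 → ZMod p) := rfl
    rw [this]
    simp [Nat.card_pi, ZMod.card]
  haveI : Finite (Module.Dual (ZMod p) (Fin 3 → ZMod p)) :=
    Finite.of_injective _ (DFunLike.coe_injective (F := Module.Dual (ZMod p) (Fin 3 → ZMod p)))
  have hcardD : Nat.card (Module.Dual (ZMod p) (Fin 3 → ZMod p)) = p ^ 3 := by
    rw [Nat.card_congr (LinearEquiv.piRing (ZMod p) (ZMod p) (Fin 3) (ZMod p)).toEquiv]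
    simp [Nat.card_pi, ZMod.card]
  have hmod := hpgrp.card_modEq_card_fixedPoints (Module.Dual (ZMod p) (Fin 3 → ZMod p))
  rw [hcardD] at hmod
  have hdvd : p ∣ Nat.card
      (MulAction.fixedPoints (Multiplicative (Fin 3 → ZMod p))
        (Module.Dual (ZMod p) (Fin 3 → ZMod p))) := by
    have h0 : (p : ℕ) ∣ p ^ 3 := dvd_pow_self p (by norm_num)
    exact (Nat.modEq_zero_iff_dvd).mp ((hmod.symm.trans (Nat.modEq_zero_iff_dvd.mpr h0)))
  have h0mem : (0 : Module.Dual (ZMod p) (Fin 3 → ZMod p)) ∈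
      MulAction.fixedPoints (Multiplicative (Fin 3 → ZMod p))
        (Module.Dual (ZMod p) (Fin 3 → ZMod p)) := by
    intro h
    rw [hsmul]
    ext v
    simp
  by_contra hno
  push_neg at hno
  have hsub : MulAction.fixedPoints (Multiplicative (Fin 3 → ZMod p))
      (Module.Dual (ZMod p) (Fin 3 → ZMod p)) = {0} := by
    apply Set.eq_singleton_iff_unique_mem.mpr
    refine ⟨h0mem, fun f hf => ?_⟩
    by_contra hf0
    obtain ⟨h, hne⟩ := hno f hf0
    apply hne
    have h2 := hf h⁻¹
    rw [hsmul, inv_inv] at h2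
    exact h2
  rw [hsub] at hdvd
  simp [Nat.card_unique] at hdvd
  exact (Fact.out : p.Prime).one_lt.ne' hdvd

end Aux

/-- for `p` an odd prime and `V = (ℤ/pℤ)³`, for every homomorphism
`φ : V → Aut(V)` the semidirect product `V ⋊[φ] V` cannot be generated by fewer than `4`
elements: every generating set has cardinality at least `4`. -/
theorem statement_10 (p : ℕ) (hp : p.Prime) (hodd : Odd p)
    (φ : Multiplicative (Fin 3 → ZMod p) →* MulAut (Multiplicative (Fin 3 → ZMod p)))
    (S : Set (SemidirectProduct (Multiplicative (Fin 3 → ZMod p))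
      (Multiplicative (Fin 3 → ZMod p)) φ))
    (hS : Subgroup.closure S = ⊤) :
    4 ≤ S.ncard := by
  classical
  haveI : Fact p.Prime := ⟨hp⟩
  obtain ⟨f, hf0, hfix⟩ := exists_fixed_functional φ
  -- the target elementary abelian group of rank 4
  set A := Multiplicative ((Fin 3 → ZMod p) × ZMod p) with hA
  -- the two component homs
  let g₁ : (Fin 3 → ZMod p) →+ ((Fin 3 → ZMod p) × ZMod p) :=
    AddMonoidHom.prod 0 f.toAddMonoidHom
  let g₂ : (Fin 3 → ZMod p) →+ ((Fin 3 → ZMod p) × ZMod p) :=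
    AddMonoidHom.prod (AddMonoidHom.id _) 0
  let f₁ : Multiplicative (Fin 3 → ZMod p) →* A := AddMonoidHom.toMultiplicative g₁
  let f₂ : Multiplicative (Fin 3 → ZMod p) →* A := AddMonoidHom.toMultiplicative g₂
  have compat : ∀ g, f₁.comp (φ g).toMonoidHom =
      (MulAut.conj (f₂ g)).toMonoidHom.comp f₁ := by
    intro g
    refine MonoidHom.ext fun n => ?_
    have h1 : f (philin φ g (Multiplicative.toAdd n)) = f (Multiplicative.toAdd n) :=
      LinearMap.congr_fun (hfix g) _
    simp only [MonoidHom.comp_apply, MulEquiv.coe_toMonoidHom, MulAut.conj_apply]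
    rw [mul_comm (f₂ g) (f₁ n), mul_inv_cancel_right]
    show Multiplicative.ofAdd (g₁ (Multiplicative.toAdd (φ g n)))
      = Multiplicative.ofAdd (g₁ (Multiplicative.toAdd n))
    congr 1
    have : Multiplicative.toAdd (φ g n) = philin φ g (Multiplicative.toAdd n) := rfl
    rw [this]
    simp [g₁, h1]
  let ρ := SemidirectProduct.lift f₁ f₂ compat
  -- surjectivity of ρ
  obtain ⟨w, hw⟩ : ∃ w, f w ≠ 0 := by
    by_contra hcon
    push_neg at hcon
    exact hf0 (LinearMap.ext fun v => by simp [hcon v])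
  have hsurj : Function.Surjective ρ := by
    intro a
    set v := (Multiplicative.toAdd a).1 with hv
    set c := (Multiplicative.toAdd a).2 with hc
    refine ⟨⟨Multiplicative.ofAdd ((c * (f w)⁻¹) • w), Multiplicative.ofAdd v⟩, ?_⟩
    rw [SemidirectProduct.mk_eq_inl_mul_inr]
    rw [map_mul, SemidirectProduct.lift_inl, SemidirectProduct.lift_inr]
    show Multiplicative.ofAdd (g₁ ((c * (f w)⁻¹) • w)) * Multiplicative.ofAdd (g₂ v) = a
    rw [← ofAdd_add]
    have : g₁ ((c * (f w)⁻¹) • w) + g₂ v = (v, c) := by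
      simp only [g₁, g₂, AddMonoidHom.prod_apply, AddMonoidHom.zero_apply,
        AddMonoidHom.id_apply, LinearMap.toAddMonoidHom_coe, Prod.mk_add_mk]
      rw [map_smul]
      simp [smul_eq_mul, mul_assoc, inv_mul_cancel₀ hw]
    rw [this, hv, hc, Prod.mk.eta]
    simp
  -- the image generates
  have hTgen : Subgroup.closure (ρ '' S) = ⊤ := by
    rw [← MonoidHom.map_closure, hS]
    exact Subgroup.map_top_of_surjective ρ hsurj
  -- pass to the additive picture and use linear algebra
  set T : Set ((Fin 3 → ZMod p) × ZMod p) := Multiplicative.toAdd '' (ρ '' S) with hT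
  have hspan : Submodule.span (ZMod p) T = ⊤ := by
    rw [Submodule.eq_top_iff']
    intro x
    have hx : Multiplicative.ofAdd x ∈ Subgroup.closure (ρ '' S) := by
      rw [hTgen]; exact Subgroup.mem_top _
    refine Subgroup.closure_induction
      (p := fun g _ => Multiplicative.toAdd g ∈ Submodule.span (ZMod p) T)
      ?_ ?_ ?_ ?_ hx
    · intro y hy
      exact Submodule.subset_span ⟨y, hy, rfl⟩
    · simp only [toAdd_one]; exact Submodule.zero_mem _
    · intro a b _ _ ha hb
      exact add_mem ha hb
    · intro a _ ha
      exact neg_mem ha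
  haveI : Fintype T := T.toFinite.fintype
  have hrank : 4 ≤ T.ncard := by
    have h1 := finrank_span_le_card (R := ZMod p) T
    rw [hspan] at h1
    rw [finrank_top] at h1
    have h2 : Module.finrank (ZMod p) ((Fin 3 → ZMod p) × ZMod p) = 4 := by
      rw [Module.finrank_prod, Module.finrank_pi, Module.finrank_self]
      simp
    rw [h2] at h1
    rwa [Set.ncard_eq_toFinset_card' T]
  haveI : Finite (SemidirectProduct (Multiplicative (Fin 3 → ZMod p))
      (Multiplicative (Fin 3 → ZMod p)) φ) :=
    Finite.of_injective (fun g => (g.left, g.right)) (by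
      intro a b h
      ext : 1
      · exact congrArg Prod.fst h
      · exact congrArg Prod.snd h)
  calc 4 ≤ T.ncard := hrank
    _ = (ρ '' S).ncard := Set.ncard_image_of_injective _ (fun a b h => h)
    _ ≤ S.ncard := Set.ncard_image_le S.toFinite
end
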